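/- arXiv:2002.02854 — 16 statements merged into one kernel-verified Lean document; each statement's English description precedes it below -/
import Mathlib

section
/- A left quasigroup (X,*) that satisfies the rack identity (x*y)*(x*z) = x*(y*z) and also the twisted Ward identity (x*y)*(x*z) = (y*y)*(y*z) is permutational, i.e., all left translations coincide. -/
/-- A left quasigroup satisfying both the rack identity and the twisted Ward
identity is permutational: all left translations coincide. -/
theorem stmt_0 {X : Type*} (mul : X → X → X)
    (hL : ∀ x : X, Function.Bijective (mul x))
    (rack : ∀ x y z : X, mul (mul x y) (mul x z) = mul x (mul y z))
    (tW : ∀ x y z : X, mul (mul x y) (mul x z) = mul (mul y y) (mul y z)) :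
    ∀ x y : X, mul x = mul y := by
  have key : ∀ a x : X, mul a = mul (mul x x) := by
    intro a x
    funext w
    obtain ⟨z, hz⟩ := (hL x).2 w
    subst hz
    rw [← rack a x z, tW a x z]
  intro x y
  rw [key x x, key y x]
end

section
/- A left quasigroup (X,*) that satisfies the Rump identity (x*y)*(x*z) = (y*x)*(y*z) and also the twisted Ward identity (x*y)*(x*z) = (y*y)*(y*z) is permutational. -/
/-- A left quasigroup satisfying both the Rump identity and the twisted Ward
identity is permutational: all left translations coincide. -/
theorem stmt_1 {X : Type*} (mul : X → X → X)
    (hL : ∀ x : X, Function.Bijective (mul x))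
    (rump : ∀ x y z : X, mul (mul x y) (mul x z) = mul (mul y x) (mul y z))
    (tW : ∀ x y z : X, mul (mul x y) (mul x z) = mul (mul y y) (mul y z)) :
    ∀ x y : X, mul x = mul y := by
  have key : ∀ a y : X, mul a = mul (mul y y) := by
    intro a y
    obtain ⟨x, hx⟩ := (hL y).2 a
    funext w
    obtain ⟨z, hz⟩ := (hL y).2 w
    calc mul a w = mul (mul y x) (mul y z) := by rw [hx, hz]
      _ = mul (mul x y) (mul x z) := (rump x y z).symm
      _ = mul (mul y y) (mul y z) := tW x y z
      _ = mul (mul y y) w := by rw [hz]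
  intro x y
  rw [key x x, key y x]
end

section
/- In a twisted Ward quasigroup, the squaring map x ↦ x*x is constant. -/
/-- In a twisted Ward quasigroup, the squaring map is constant. -/
theorem stmt_3 {X : Type*} (mul : X → X → X)
    (hL : ∀ x : X, Function.Bijective (mul x))
    (hR : ∀ z : X, Function.Bijective (fun x => mul x z))
    (tW : ∀ x y z : X, mul (mul x y) (mul x z) = mul (mul y y) (mul y z)) :
    ∀ x y : X, mul x x = mul y y := by
  -- key: for all a b, mul (mul a b) (mul a b) = mul (mul b b) (mul b b)
  have key : ∀ a b : X, mul (mul a b) (mul a b) = mul (mul b b) (mul b b) :=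
    fun a b => tW a b b
  intro x y
  obtain ⟨a, ha⟩ := (hR y).2 x
  obtain ⟨b, hb⟩ := (hR y).2 y
  have h1 := key a y
  have h2 := key b y
  simp only [ha, hb] at h1 h2
  exact h1.trans h2.symm
end

section
/- In a twisted Ward quasigroup, if a₁*c₁ = a₂*c₂ then L_{a₁} ∘ L_{c₁}⁻¹ = L_{a₂} ∘ L_{c₂}⁻¹, where L_x denotes the left translation y ↦ x*y. -/
/-- In a twisted Ward quasigroup, if a₁*c₁ = a₂*c₂ then
L_{a₁} ∘ L_{c₁}⁻¹ = L_{a₂} ∘ L_{c₂}⁻¹: whenever c₁*w₁ = c₂*w₂ (= z), we have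
a₁*w₁ = a₂*w₂. -/
theorem stmt_4 {X : Type*} (mul : X → X → X)
    (hL : ∀ x : X, Function.Bijective (mul x))
    (hR : ∀ z : X, Function.Bijective (fun x => mul x z))
    (tW : ∀ x y z : X, mul (mul x y) (mul x z) = mul (mul y y) (mul y z))
    (a₁ a₂ c₁ c₂ : X) (h : mul a₁ c₁ = mul a₂ c₂) :
    ∀ w₁ w₂ : X, mul c₁ w₁ = mul c₂ w₂ → mul a₁ w₁ = mul a₂ w₂ := by
  -- First: the square x*x is constant.
  have sq : ∀ u v : X, mul u u = mul v v := by
    intro u v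
    obtain ⟨x, hx⟩ := (hR v).2 u
    obtain ⟨x', hx'⟩ := (hR v).2 v
    have h1 := tW x v v
    have h2 := tW x' v v
    simp only [hx] at h1
    simp only [hx'] at h2
    rw [h1, ← h2]
  intro w₁ w₂ hw
  have h1 := tW a₁ c₁ w₁
  have h2 := tW a₂ c₂ w₂
  rw [sq c₁ c₂, hw, ← h2, h] at h1
  exact (hL _).1 h1
end

section
/- Every twisted Ward quasigroup satisfies the quadrangle criterion: for all a₁,a₂,b₁,b₂,c₁,c₂,d₁,d₂, if a₁*c₁ = a₂*c₂, a₁*d₁ = a₂*d₂ and b₁*c₁ = b₂*c₂, then b₁*d₁ = b₂*d₂. -/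
/-- Every twisted Ward quasigroup satisfies the quadrangle criterion. -/
theorem stmt_5 {X : Type*} (mul : X → X → X)
    (hL : ∀ x : X, Function.Bijective (mul x))
    (hR : ∀ z : X, Function.Bijective (fun x => mul x z))
    (tW : ∀ x y z : X, mul (mul x y) (mul x z) = mul (mul y y) (mul y z))
    (a₁ a₂ b₁ b₂ c₁ c₂ d₁ d₂ : X)
    (h1 : mul a₁ c₁ = mul a₂ c₂) (h2 : mul a₁ d₁ = mul a₂ d₂)
    (h3 : mul b₁ c₁ = mul b₂ c₂) :
    mul b₁ d₁ = mul b₂ d₂ := by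
  have k1 := tW a₁ c₁ d₁
  have k2 := tW a₂ c₂ d₂
  have k3 := tW b₁ c₁ d₁
  have k4 := tW b₂ c₂ d₂
  exact (hL (mul b₁ c₁)).1 (by rw [k3, ← k1, h1, h2, k2, ← k4, ← h3])
end

section
/- Let (X,·) be a group, ψ an automorphism of (X,·) and c ∈ X. Define x*y = c·ψ(x⁻¹·y). Then (X,*) is a twisted Ward quasigroup, i.e., all left and right translations of * are bijections and (x*y)*(x*z) = (y*y)*(y*z) for all x,y,z. -/
/-- For a group (X,·), ψ ∈ Aut(X,·) and c ∈ X, the operation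
x*y = c·ψ(x⁻¹·y) defines a twisted Ward quasigroup. -/
theorem stmt_6 {X : Type*} [Group X] (ψ : X ≃* X) (c : X)
    (mul : X → X → X) (hmul : ∀ x y : X, mul x y = c * ψ (x⁻¹ * y)) :
    (∀ x : X, Function.Bijective (mul x)) ∧
    (∀ z : X, Function.Bijective (fun x => mul x z)) ∧
    (∀ x y z : X, mul (mul x y) (mul x z) = mul (mul y y) (mul y z)) := by
  refine ⟨?_, ?_, ?_⟩
  · intro x
    have h : mul x = fun y => c * ψ (x⁻¹ * y) := funext (hmul x)
    rw [h]
    exact (Equiv.mulLeft c).bijective.comp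
      (ψ.toEquiv.bijective.comp (Equiv.mulLeft x⁻¹).bijective)
  · intro z
    have h : (fun x => mul x z) = fun x => c * ψ (x⁻¹ * z) := by
      funext x; exact hmul x z
    rw [h]
    exact (Equiv.mulLeft c).bijective.comp
      (ψ.toEquiv.bijective.comp (((Equiv.mulRight z).bijective.comp
        (Equiv.inv X).bijective)))
  · intro x y z
    simp only [hmul, map_mul, map_inv, mul_inv_rev]
    group
end

section
/- Let (X,·) be a group and φ, ψ automorphisms of (X,·). The quasigroups (X,*_φ) and (X,*_ψ), where x *_φ y = φ(x⁻¹·y) and x *_ψ y = ψ(x⁻¹·y), are isomorphic (as magmas) if and only if φ and ψ are conjugate in Aut(X,·). -/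
/-- tWq(X,·,φ,1) and tWq(X,·,ψ,1) are isomorphic as magmas if and only if
φ and ψ are conjugate in Aut(X,·). -/
theorem stmt_9 {X : Type*} [Group X] (φ ψ : MulAut X) :
    (∃ ρ : X ≃ X, ∀ x y : X, ρ (φ (x⁻¹ * y)) = ψ ((ρ x)⁻¹ * ρ y)) ↔
      ∃ σ : MulAut X, ψ = σ * φ * σ⁻¹ := by
  constructor
  · rintro ⟨ρ, h⟩
    have h1 : ρ 1 = 1 := by
      have := h 1 1
      simpa using this
    have hcomm : ∀ y, ρ (φ y) = ψ (ρ y) := by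
      intro y
      have := h 1 y
      simpa [h1] using this
    have hinv : ∀ x : X, ρ x⁻¹ = (ρ x)⁻¹ := by
      intro x
      have := h x 1
      rw [mul_one, h1, mul_one, hcomm] at this
      exact ψ.injective this
    have hmul : ∀ a b : X, ρ (a * b) = ρ a * ρ b := by
      intro a b
      have := h a⁻¹ b
      rw [inv_inv, hcomm, hinv, inv_inv] at this
      exact ψ.injective this
    refine ⟨MulEquiv.mk ρ hmul, ?_⟩
    ext x
    show ψ x = ρ (φ (ρ.symm x))
    rw [hcomm, Equiv.apply_symm_apply]
  · rintro ⟨σ, rfl⟩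
    refine ⟨σ.toEquiv, fun x y => ?_⟩
    simp [mul_comm]
end

section
/- If ρ : X → X is a bijection satisfying ρ(φ(x⁻¹y)) = ψ(ρ(x)⁻¹ρ(y)) for all x,y in a group X, where φ, ψ are automorphisms of X, then ρ is itself a group automorphism of X and ρφ = ψρ. -/
/-- A bijection ρ satisfying ρ(φ(x⁻¹y)) = ψ(ρ(x)⁻¹ρ(y)) for automorphisms φ, ψ
of a group X is itself a group automorphism and satisfies ρφ = ψρ. -/
theorem stmt_10 {X : Type*} [Group X] (φ ψ : MulAut X) (ρ : X → X)
    (hρ : Function.Bijective ρ)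
    (h : ∀ x y : X, ρ (φ (x⁻¹ * y)) = ψ ((ρ x)⁻¹ * ρ y)) :
    (∀ x y : X, ρ (x * y) = ρ x * ρ y) ∧ (∀ x : X, ρ (φ x) = ψ (ρ x)) := by
  have h1 : ρ 1 = 1 := by
    have := h 1 1
    simpa using this
  have hcomm : ∀ x : X, ρ (φ x) = ψ (ρ x) := by
    intro x
    have := h 1 x
    simpa [h1] using this
  have hinv : ∀ x y : X, ρ (x⁻¹ * y) = (ρ x)⁻¹ * ρ y := by
    intro x y
    have := h x y
    rw [hcomm] at this
    exact (ψ.injective this)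
  have hneg : ∀ x : X, ρ x⁻¹ = (ρ x)⁻¹ := by
    intro x
    have := hinv x 1
    simpa [h1] using this
  refine ⟨fun x y => ?_, hcomm⟩
  have := hinv x⁻¹ y
  simpa [hneg] using this
end

section
/- In a twisted Ward left quasigroup, if two left translations L_x and L_y agree at one point, then L_x = L_y. -/
/-- In a twisted Ward left quasigroup, left translations agreeing at one point
are equal. -/
theorem stmt_11 {X : Type*} (mul : X → X → X)
    (hL : ∀ x : X, Function.Bijective (mul x))
    (tW : ∀ x y z : X, mul (mul x y) (mul x z) = mul (mul y y) (mul y z))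
    (x y c : X) (h : mul x c = mul y c) :
    mul x = mul y := by
  funext z
  have h1 := tW x c z
  have h2 := tW y c z
  rw [h] at h1
  exact (hL (mul y c)).1 (h1.trans h2.symm)
end

section
/- Every finite faithful twisted Ward left quasigroup is a quasigroup, i.e., all right translations are also bijective. -/
/-- Every finite faithful twisted Ward left quasigroup is a quasigroup. -/
theorem stmt_12 {X : Type*} [Finite X] (mul : X → X → X)
    (hL : ∀ x : X, Function.Bijective (mul x))
    (faithful : ∀ x y : X, mul x = mul y → x = y)
    (tW : ∀ x y z : X, mul (mul x y) (mul x z) = mul (mul y y) (mul y z)) :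
    ∀ z : X, Function.Bijective (fun x => mul x z) := by
  intro z
  rw [← Finite.injective_iff_bijective]
  intro a b hab
  simp only at hab
  apply faithful
  funext w
  have h1 := tW a z w
  have h2 := tW b z w
  rw [hab] at h1
  have : mul (mul b z) (mul a w) = mul (mul b z) (mul b w) := h1.trans h2.symm
  exact (hL (mul b z)).1 this
end

section
/- In a finite twisted Ward left quasigroup, the relation x ≡ y defined by x*x = y*y is a congruence: it is preserved by multiplication on both sides and by left division. -/
/-- In a finite twisted Ward left quasigroup, the relation x ≡ y given by
x*x = y*y is a congruence: it is preserved by multiplication on both sides and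
by left division on both sides. -/
theorem stmt_14 {X : Type*} [Finite X] (mul : X → X → X) (ld : X → X → X)
    (hL : ∀ x : X, Function.Bijective (mul x))
    (hld : ∀ x y : X, mul x (ld x y) = y ∧ ld x (mul x y) = y)
    (tW : ∀ x y z : X, mul (mul x y) (mul x z) = mul (mul y y) (mul y z)) :
    ∀ x y : X, mul x x = mul y y →
      ∀ z : X,
        (mul (mul z x) (mul z x) = mul (mul z y) (mul z y)) ∧
        (mul (mul x z) (mul x z) = mul (mul y z) (mul y z)) ∧
        (mul (ld z x) (ld z x) = mul (ld z y) (ld z y)) ∧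
        (mul (ld x z) (ld x z) = mul (ld y z) (ld y z)) := by
  intro x y hxy z
  set s : X → X := fun a => mul a a with hs
  -- key1 : s (mul a b) = s (s b)
  have key1 : ∀ a b : X, s (mul a b) = s (s b) := by
    intro a b
    simpa [hs] using tW a b b
  -- key2 : s c = s (s (ld a c))
  have key2 : ∀ a c : X, s c = s (s (ld a c)) := by
    intro a c
    have := key1 a (ld a c)
    rwa [(hld a c).1] at this
  -- s is injective on its range
  have hinj : Set.InjOn s (Set.range s) := by
    have hmaps : Set.MapsTo s (Set.range s) (Set.range s) := by
      intro a _; exact Set.mem_range_self a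
    have hsurj : Set.SurjOn s (Set.range s) (Set.range s) := by
      rintro w ⟨v, rfl⟩
      exact ⟨s (ld v v), Set.mem_range_self _, (key2 v v).symm⟩
    exact ((Set.toFinite (Set.range s)).surjOn_iff_bijOn_of_mapsTo hmaps).1 hsurj
      |>.injOn
  refine ⟨?_, ?_, ?_, ?_⟩
  · show s (mul z x) = s (mul z y)
    have hss : s x = s y := hxy
    rw [key1 z x, key1 z y, hss]
  · show s (mul x z) = s (mul y z)
    rw [key1 x z, key1 y z]
  · show s (ld z x) = s (ld z y)
    apply hinj (Set.mem_range_self _) (Set.mem_range_self _)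
    have h1 := key2 z x
    have h2 := key2 z y
    show s (s (ld z x)) = s (s (ld z y))
    rw [← h1, ← h2]
    exact hxy
  · show s (ld x z) = s (ld y z)
    apply hinj (Set.mem_range_self _) (Set.mem_range_self _)
    show s (s (ld x z)) = s (s (ld y z))
    rw [← key2 x z, ← key2 y z]
end

section
/- In a twisted Ward left quasigroup, every equivalence class of the relation ≡ (x≡y iff x*x = y*y) has cardinality equal to the number of equivalence classes of the Cayley kernel ∼ (x∼y iff L_x = L_y). -/
/-- In a twisted Ward left quasigroup, every ≡-class (x ≡ y iff x*x = y*y) has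
cardinality equal to the number of classes of the Cayley kernel ∼
(x ∼ y iff L_x = L_y). -/
theorem stmt_15 {X : Type*} (mul : X → X → X)
    (hL : ∀ x : X, Function.Bijective (mul x))
    (tW : ∀ x y z : X, mul (mul x y) (mul x z) = mul (mul y y) (mul y z))
    (x : X) :
    Cardinal.mk {y : X // mul y y = mul x x} =
      Cardinal.mk (Quotient (Setoid.mk (fun a b : X => mul a = mul b)
        ⟨fun _ => rfl, Eq.symm, Eq.trans⟩)) := by
  set S : Setoid X := Setoid.mk (fun a b : X => mul a = mul b)
    ⟨fun _ => rfl, Eq.symm, Eq.trans⟩ with hS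
  obtain ⟨v, hv⟩ := (hL x).2 x
  -- every z * v has square equal to x * x
  have hsq : ∀ z : X, mul (mul z v) (mul z v) = mul x x := by
    intro z
    have h1 := tW z v v
    have h2 := tW x v v
    rw [hv] at h2
    exact h1.trans h2.symm
  refine le_antisymm ?_ ?_
  · -- inject the ≡-class into the quotient: y ↦ ⟦y⟧
    refine Cardinal.mk_le_of_injective
      (f := fun y : {y : X // mul y y = mul x x} => (Quotient.mk S y.1)) ?_
    intro a b hab
    have h : mul a.1 = mul b.1 := Quotient.exact hab
    have key : mul a.1 b.1 = mul a.1 a.1 := by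
      calc mul a.1 b.1 = mul b.1 b.1 := by rw [h]
        _ = mul x x := b.2
        _ = mul a.1 a.1 := a.2.symm
    exact Subtype.ext ((hL a.1).1 key).symm
  · -- inject the quotient into the ≡-class: ⟦z⟧ ↦ z * v
    refine Cardinal.mk_le_of_injective
      (f := Quotient.lift
        (fun z : X => (⟨mul z v, hsq z⟩ : {y : X // mul y y = mul x x}))
        (fun a b (h : mul a = mul b) => by simp [h])) ?_
    intro q r hqr
    induction q using Quotient.ind with
    | _ a =>
    induction r using Quotient.ind with
    | _ b =>
    have h : mul a v = mul b v := congrArg Subtype.val hqr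
    refine Quotient.sound (funext fun c => ?_)
    have h1 := tW a v c
    have h2 := tW b v c
    rw [h] at h1
    exact (hL (mul b v)).1 (h1.trans h2.symm)
end

section
/- A finite twisted Ward left quasigroup X satisfies |X| = m·k, where m is the number of Cayley-kernel classes (of the relation x∼y iff L_x = L_y) and k is the number of classes of the relation x≡y iff x*x = y*y; moreover every ∼-class has size k and every ≡-class has size m. -/
set_option linter.unusedSectionVars false

section aux
variable {X : Type*} [Finite X] (mul : X → X → X)
    (hL : ∀ x : X, Function.Bijective (mul x))
    (tW : ∀ x y z : X, mul (mul x y) (mul x z) = mul (mul y y) (mul y z))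

include hL tW in
theorem tw_injA {y z : X} (h1 : mul y = mul z) (h2 : mul y y = mul z z) : y = z := by
  apply (hL z).1
  rw [← congrFun h1 y, h2]

include hL tW in
theorem tw_Lwd {x x' : X} (u : X) (h : mul x = mul x') :
    mul (mul x u) = mul (mul x' u) := by
  funext z
  obtain ⟨z', rfl⟩ := (hL x).2 z
  rw [tW x u z', show mul x z' = mul x' z' from congrFun h z', tW x' u z']

include hL tW in
theorem tw_Linj {x x' : X} (u : X) (h : mul (mul x u) = mul (mul x' u)) :
    mul x = mul x' := by
  funext z
  apply (hL (mul x u)).1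
  rw [tW x u z, h, tW x' u z]


include hL tW in
theorem tw_master (w w' : X) : ∃ y : X, mul y = mul w ∧ mul y y = mul w' w' := by
  obtain ⟨u, hu⟩ := (hL w).2 w'
  set sL : Setoid X := Setoid.mk (fun a b : X => mul a = mul b)
    ⟨fun _ => rfl, Eq.symm, Eq.trans⟩ with hsL
  have hΨ : Function.Surjective (fun q : Quotient sL =>
      Quotient.lift (fun x => Quotient.mk sL (mul x u))
        (fun a b hab => Quotient.sound (tw_Lwd mul hL tW u hab)) q) := by
    rw [← Finite.injective_iff_surjective]
    intro a b h
    obtain ⟨a, rfl⟩ := Quotient.exists_rep a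
    obtain ⟨b, rfl⟩ := Quotient.exists_rep b
    simp only [Quotient.lift_mk] at h
    exact Quotient.sound (tw_Linj mul hL tW u (Quotient.exact h))
  obtain ⟨q, hq⟩ := hΨ (Quotient.mk sL w)
  obtain ⟨x₂, rfl⟩ := Quotient.exists_rep q
  simp only [Quotient.lift_mk] at hq
  refine ⟨mul x₂ u, Quotient.exact hq, ?_⟩
  rw [tW x₂ u u, ← tW w u u, hu]
end aux


/-- A finite twisted Ward left quasigroup X satisfies |X| = m·k where m is the
number of Cayley-kernel classes and k is the number of squaring classes;
moreover every ∼-class has size k and every ≡-class has size m. -/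
theorem stmt_16 {X : Type*} [Finite X] (mul : X → X → X)
    (hL : ∀ x : X, Function.Bijective (mul x))
    (tW : ∀ x y z : X, mul (mul x y) (mul x z) = mul (mul y y) (mul y z))
    (m k : ℕ)
    (hm : m = Nat.card (Quotient (Setoid.mk (fun a b : X => mul a = mul b)
        ⟨fun _ => rfl, Eq.symm, Eq.trans⟩)))
    (hk : k = Nat.card (Quotient (Setoid.mk (fun a b : X => mul a a = mul b b)
        ⟨fun _ => rfl, Eq.symm, Eq.trans⟩))) :
    Nat.card X = m * k ∧
    (∀ x : X, Nat.card {y : X // mul y = mul x} = k) ∧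
    (∀ x : X, Nat.card {y : X // mul y y = mul x x} = m) := by
  subst hm hk
  set sL : Setoid X := Setoid.mk (fun a b : X => mul a = mul b)
    ⟨fun _ => rfl, Eq.symm, Eq.trans⟩ with hsL
  set sS : Setoid X := Setoid.mk (fun a b : X => mul a a = mul b b)
    ⟨fun _ => rfl, Eq.symm, Eq.trans⟩ with hsS
  refine ⟨?_, ?_, ?_⟩
  · rw [← Nat.card_prod]
    apply Nat.card_congr
    refine Equiv.ofBijective (fun w => (Quotient.mk sL w, Quotient.mk sS w)) ⟨?_, ?_⟩
    · intro a b h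
      rw [Prod.ext_iff] at h
      exact tw_injA mul hL tW (Quotient.exact h.1) (Quotient.exact h.2)
    · rintro ⟨p, q⟩
      obtain ⟨w, rfl⟩ := Quotient.exists_rep p
      obtain ⟨w', rfl⟩ := Quotient.exists_rep q
      obtain ⟨y, h1, h2⟩ := tw_master mul hL tW w w'
      exact ⟨y, Prod.ext (Quotient.sound h1) (Quotient.sound h2)⟩
  · intro x
    apply Nat.card_congr
    refine Equiv.ofBijective (fun y => Quotient.mk sS y.1) ⟨?_, ?_⟩
    · intro a b h
      exact Subtype.ext (tw_injA mul hL tW (a.2.trans b.2.symm) (Quotient.exact h))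
    · intro q
      obtain ⟨w', rfl⟩ := Quotient.exists_rep q
      obtain ⟨y, h1, h2⟩ := tw_master mul hL tW x w'
      exact ⟨⟨y, h1⟩, Quotient.sound h2⟩
  · intro x
    apply Nat.card_congr
    refine Equiv.ofBijective (fun y => Quotient.mk sL y.1) ⟨?_, ?_⟩
    · intro a b h
      exact Subtype.ext (tw_injA mul hL tW (Quotient.exact h) (a.2.trans b.2.symm))
    · intro q
      obtain ⟨w, rfl⟩ := Quotient.exists_rep q
      obtain ⟨y, h1, h2⟩ := tw_master mul hL tW w x
      exact ⟨⟨y, h2⟩, Quotient.sound h1⟩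
end

section
/- Every twisted Ward left quasigroup of prime order is either permutational (all left translations equal) or a quasigroup (all right translations also bijective). -/
/-- Every twisted Ward left quasigroup of prime order is either permutational
or a quasigroup. -/
theorem stmt_17 {X : Type*} [Finite X] (hp : (Nat.card X).Prime)
    (mul : X → X → X)
    (hL : ∀ x : X, Function.Bijective (mul x))
    (tW : ∀ x y z : X, mul (mul x y) (mul x z) = mul (mul y y) (mul y z)) :
    (∀ x y : X, mul x = mul y) ∨
      (∀ z : X, Function.Bijective (fun x => mul x z)) := by
  classical
  have hne : Nonempty X := (Nat.card_pos_iff.mp hp.pos).1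
  obtain ⟨y₀⟩ := hne
  set fv : X → X → X := fun y z => mul (mul y y) (mul y z) with hfv
  have hcomp : ∀ x y z, mul (mul x y) (mul x z) = fv y z := fun x y z => tW x y z
  -- one coincidence of right translations forces equal left translations
  have E1 : ∀ a b z : X, mul a z = mul b z → mul a = mul b := by
    intro a b z h
    funext u
    apply (hL (mul b z)).1
    calc mul (mul b z) (mul a u) = mul (mul a z) (mul a u) := by rw [h]
      _ = fv z u := hcomp a z u
      _ = mul (mul b z) (mul b u) := (hcomp b z u).symm
  -- injectivity of the induced map on classes
  have E2 : ∀ x x' y : X, mul (mul x y) = mul (mul x' y) → mul x = mul x' := by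
    intro x x' y h
    funext u
    apply (hL (mul x y)).1
    calc mul (mul x y) (mul x u) = fv y u := hcomp x y u
      _ = mul (mul x' y) (mul x' u) := (hcomp x' y u).symm
      _ = mul (mul x y) (mul x' u) := by rw [h]
  -- ~ is a left congruence
  have E3 : ∀ x x' y : X, mul x = mul x' → mul (mul x y) = mul (mul x' y) := by
    intro x x' y h
    funext u
    obtain ⟨z, rfl⟩ := (hL x).2 u
    calc mul (mul x y) (mul x z) = fv y z := hcomp x y z
      _ = mul (mul x' y) (mul x' z) := (hcomp x' y z).symm
      _ = mul (mul x' y) (mul x z) := by rw [← h]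
  -- fv-value determines the class of x*y and conversely
  have E4a : ∀ x y y' : X, fv y = fv y' → mul (mul x y) = mul (mul x y') := by
    intro x y y' h
    funext u
    obtain ⟨z, rfl⟩ := (hL x).2 u
    calc mul (mul x y) (mul x z) = fv y z := hcomp x y z
      _ = fv y' z := by rw [h]
      _ = mul (mul x y') (mul x z) := (hcomp x y' z).symm
  have E4b : ∀ x y y' : X, mul (mul x y) = mul (mul x y') → fv y = fv y' := by
    intro x y y' h
    funext z
    calc fv y z = mul (mul x y) (mul x z) := (hcomp x y z).symm
      _ = mul (mul x y') (mul x z) := by rw [h]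
      _ = fv y' z := hcomp x y' z
  -- the set of distinct left translations
  let R : Type _ := {g : X → X // ∃ x, mul x = g}
  haveI : Finite R := Subtype.finite
  let π : X → R := fun x => ⟨mul x, x, rfl⟩
  -- the map [x] ↦ [x * y₀] on classes, realized on R via representatives
  let θ : R → R := fun q =>
    ⟨mul (mul (Classical.choose q.2) y₀), mul (Classical.choose q.2) y₀, rfl⟩
  have hθinj : Function.Injective θ := by
    intro q q' h
    have h1 : mul (mul (Classical.choose q.2) y₀) =
        mul (mul (Classical.choose q'.2) y₀) := congrArg Subtype.val h
    have h2 := E2 _ _ y₀ h1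
    have hq := Classical.choose_spec q.2
    have hq' := Classical.choose_spec q'.2
    exact Subtype.ext (by rw [← hq, ← hq', h2])
  have hθsurj : Function.Surjective θ := Finite.surjective_of_injective hθinj
  -- every class is the class of some x * y₀
  have hsurj : ∀ b : X, ∃ x : X, mul (mul x y₀) = mul b := by
    intro b
    obtain ⟨q, hq⟩ := hθsurj (π b)
    refine ⟨Classical.choose q.2, ?_⟩
    have := congrArg Subtype.val hq
    exact this
  -- all classes have the same cardinality
  have hm : ∀ a : X,
      Nat.card {c : X // mul c = mul a} = Nat.card {y : X // fv y = fv y₀} := by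
    intro a
    obtain ⟨x, hx⟩ := hsurj a
    refine (Nat.card_eq_of_bijective
      (fun y : {y : X // fv y = fv y₀} =>
        (⟨mul x y.1, by rw [← hx]; exact E4a x y.1 y₀ y.2⟩ : {c : X // mul c = mul a}))
      ⟨?_, ?_⟩).symm
    · intro y y' h
      exact Subtype.ext ((hL x).1 (congrArg Subtype.val h))
    · rintro ⟨c, hc⟩
      obtain ⟨z, rfl⟩ := (hL x).2 c
      refine ⟨⟨z, E4b x z y₀ (by rw [hc, ← hx])⟩, rfl⟩
  -- cardinality decomposition : Nat.card X = Nat.card R * m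
  set m : ℕ := Nat.card {y : X // fv y = fv y₀} with hmdef
  have hcard : Nat.card X = Nat.card R * m := by
    haveI : Fintype X := Fintype.ofFinite X
    haveI : Fintype R := Fintype.ofFinite R
    have e1 : Nat.card X = Nat.card (Σ q : R, {x : X // π x = q}) :=
      (Nat.card_congr (Equiv.sigmaFiberEquiv π)).symm
    rw [e1]
    have e2 : ∀ q : R, Nat.card {x : X // π x = q} = m := by
      intro q
      have ha := Classical.choose_spec q.2
      set a := Classical.choose q.2 with hadef
      have : ∀ x : X, π x = q ↔ mul x = mul a := by
        intro x
        constructor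
        · intro h
          have := congrArg Subtype.val h
          simpa [π, ha] using this
        · intro h
          exact Subtype.ext (by simpa [π, ha] using h)
      calc Nat.card {x : X // π x = q}
          = Nat.card {x : X // mul x = mul a} :=
            Nat.card_congr (Equiv.subtypeEquivRight this)
        _ = m := hm a
    rw [Nat.card_eq_fintype_card, Fintype.card_sigma]
    simp_rw [← Nat.card_eq_fintype_card, e2]
    simp [Finset.sum_const, mul_comm, Nat.card_eq_fintype_card]
  have hdvd : m ∣ Nat.card X := ⟨Nat.card R, by rw [hcard, mul_comm]⟩
  rcases (hp.eq_one_or_self_of_dvd m hdvd) with h1 | h2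
  · -- m = 1 : all classes are singletons, right translations injective
    right
    intro z
    rw [← Finite.injective_iff_bijective]
    intro a b hab
    have hab' : mul a = mul b := E1 a b z hab
    have hone : Nat.card {c : X // mul c = mul b} = 1 := by rw [hm b, h1]
    have hsub := (Nat.card_eq_one_iff_unique.mp hone).1
    have := hsub.elim (⟨a, hab'⟩ : {c : X // mul c = mul b}) ⟨b, rfl⟩
    exact congrArg Subtype.val this
  · -- m = card X : there is only one class
    left
    have hR1 : Nat.card R = 1 := by
      have := hcard
      rw [h2] at this
      have hpos := hp.pos
      nlinarith [this, hpos]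
    have hsub := (Nat.card_eq_one_iff_unique.mp hR1).1
    intro x y
    have := hsub.elim (π x) (π y)
    exact congrArg Subtype.val this
end

section
/- Let (X,*) be a left quasigroup with left division \ satisfying the twisted Ward identity (x*y)*(x*z) = (y*y)*(y*z). Define r : X×X → X×X by r(x,y) = (x\y, (x\y)*(x\y)). Then r satisfies the set-theoretic Yang–Baxter equation (r×id)(id×r)(r×id) = (id×r)(r×id)(id×r) and is idempotent: r∘r = r. -/
/-- For a twisted Ward left quasigroup (X,*) with left division \, the map
r(x,y) = (x\y, (x\y)*(x\y)) is an idempotent solution of the set-theoretic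
Yang–Baxter equation. -/
theorem stmt_18 {X : Type*} (mul : X → X → X) (ld : X → X → X)
    (hL : ∀ x : X, Function.Bijective (mul x))
    (hld : ∀ x y : X, mul x (ld x y) = y ∧ ld x (mul x y) = y)
    (tW : ∀ x y z : X, mul (mul x y) (mul x z) = mul (mul y y) (mul y z))
    (r : X × X → X × X)
    (hr : ∀ x y : X, r (x, y) = (ld x y, mul (ld x y) (ld x y))) :
    (∀ p : X × X × X,
      (let R1 : X × X × X → X × X × X :=
        fun q => ((r (q.1, q.2.1)).1, (r (q.1, q.2.1)).2, q.2.2);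
       let R2 : X × X × X → X × X × X :=
        fun q => (q.1, (r (q.2.1, q.2.2)).1, (r (q.2.1, q.2.2)).2);
       R1 (R2 (R1 p)) = R2 (R1 (R2 p)))) ∧
    (∀ q : X × X, r (r q) = r q) := by
  have key : ∀ p q r', mul p r' = q → ld p q = r' := by
    intro p q r' h
    exact (hL p).1 ((hld p q).1.trans h.symm)
  constructor
  · rintro ⟨x, y, z⟩
    intro R1 R2
    simp only [R1, R2, hr]
    set a := ld x y with ha
    set b := ld y z with hb
    set e := ld x b with he
    have hxa : mul x a = y := (hld x y).1
    have hyb : mul y b = z := (hld y z).1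
    have hxe : mul x e = b := (hld x b).1
    have h1 : ld (mul a a) z = mul a e := key _ _ _ (by
      calc mul (mul a a) (mul a e) = mul (mul x a) (mul x e) := (tW x a e).symm
        _ = mul y b := by rw [hxa, hxe]
        _ = z := hyb)
    have h2 : ld a (mul a e) = e := (hld a e).2
    have hbb : mul b b = mul (mul e e) (mul e e) := by
      rw [← hxe]; exact tW x e e
    have h4 : ld (mul e e) (mul b b) = mul e e := key _ _ _ hbb.symm
    have h5 : mul (mul a e) (mul a e) = mul (mul e e) (mul e e) := tW a e e
    simp only [h1, h2, ← he, h4, h5]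
  · rintro ⟨x, y⟩
    rw [hr, hr, (hld _ _).2]
end

section
/- Let r : X×X → X×X, r(x,y) = (x∘y, x∙y), be an idempotent braiding (solution of the set-theoretic Yang–Baxter equation with r∘r = r) that is nondegenerate (all maps y ↦ x∘y and all maps x ↦ x∙y are bijective). If |X| ≥ 2, a contradiction follows; i.e., every idempotent nondegenerate braiding exists only on sets with at most one element. -/
/-- Every idempotent nondegenerate braiding exists only on sets with at most
one element: if |X| ≥ 2, a contradiction follows. -/
theorem stmt_19 {X : Type*} (r : X × X → X × X)
    (hYB : ∀ p : X × X × X,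
      (let R1 : X × X × X → X × X × X :=
        fun q => ((r (q.1, q.2.1)).1, (r (q.1, q.2.1)).2, q.2.2);
       let R2 : X × X × X → X × X × X :=
        fun q => (q.1, (r (q.2.1, q.2.2)).1, (r (q.2.1, q.2.2)).2);
       R1 (R2 (R1 p)) = R2 (R1 (R2 p))))
    (hidem : ∀ q : X × X, r (r q) = r q)
    (hleft : ∀ x : X, Function.Bijective (fun y => (r (x, y)).1))
    (hright : ∀ y : X, Function.Bijective (fun x => (r (x, y)).2))
    (h2 : ∃ x y : X, x ≠ y) :
    False := by
  obtain ⟨a, b, hab⟩ := h2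
  have key : ∀ q v : X, (r (q, v)).1 = q := by
    intro q v
    -- find u with r (u, v) = (u, v)
    obtain ⟨x, hx⟩ := (hright a).2 v
    simp only at hx
    have hpair : r (x, a) = ((r (x, a)).1, v) := by
      rw [← hx]
    have hfix : r ((r (x, a)).1, v) = ((r (x, a)).1, v) := by
      have h := hidem (x, a)
      rw [hpair] at h
      exact h
    set u := (r (x, a)).1 with hu
    -- find x' with τ_u x' = q
    obtain ⟨x', hx'⟩ := (hright u).2 q
    simp only at hx'
    have H := hYB (x', u, v)
    simp only [hfix] at H
    have H1 := congrArg Prod.fst H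
    simp only at H1
    -- H1 : (r ((r (x',u)).1, (r ((r (x',u)).2, v)).1)).1 = (r (x',u)).1
    have hid : (r ((r (x', u)).1, (r (x', u)).2)).1 = (r (x', u)).1 := by
      have h := hidem (x', u)
      have : ((r (x', u)).1, (r (x', u)).2) = r (x', u) := rfl
      rw [this, h]
    have hinj := (hleft ((r (x', u)).1)).1
    have heq : (r ((r (x', u)).2, v)).1 = (r (x', u)).2 := by
      apply hinj
      simp only
      rw [H1, hid]
    rw [hx'] at heq
    exact heq
  have := (hleft a).1 (a₁ := a) (a₂ := b) (by simp only [key])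
  exact hab this
end
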